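/- arXiv:1809.05797 — 3 statements merged into one kernel-verified Lean document; each statement's English description precedes it below -/
import Mathlib

section
/- In a state-based potential game with potential function φ, any action-state pair [a*,x*] that maximizes φ over A × X and satisfies that x* is a recurrent state of the Markov chain P(a*;·,·) starting from x* (i.e., x* ∈ X(a*|x) for every x ∈ X(a*|x*)) is a recurrent state equilibrium. -/
/-- `y` is reachable from `x` with positive probability under the constant joint action `a`. -/
def Reach {ι : Type*} {A : ι → Type*} {X : Type*}
    (P : (∀ i, A i) → X → X → ℝ) (a : ∀ i, A i) : X → X → Prop :=
  Relation.TransGen fun u v => 0 < P a u v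

/-- `[a, x]` is a recurrent state equilibrium (Definition 3). -/
def IsRSE {ι : Type*} [DecidableEq ι] {A : ι → Type*} {X : Type*}
    (P : (∀ i, A i) → X → X → ℝ) (c : ι → (∀ i, A i) → X → ℝ)
    (a : ∀ i, A i) (x : X) : Prop :=
  (∀ y, Reach P a x y → Reach P a y x) ∧
  (∀ y, Reach P a x y → ∀ i (b : A i),
    c i (Function.update a i b) y ≤ c i a y)

/-- `φ` is a potential function for the state-based game (Definition 5). -/
def IsPotential {ι : Type*} [DecidableEq ι] {A : ι → Type*} {X : Type*}
    (P : (∀ i, A i) → X → X → ℝ) (c : ι → (∀ i, A i) → X → ℝ)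
    (φ : (∀ i, A i) → X → ℝ) : Prop :=
  (∀ i (b : A i) (a : ∀ i, A i) (x : X),
    c i (Function.update a i b) x - c i a x = φ (Function.update a i b) x - φ a x) ∧
  (∀ (a : ∀ i, A i) (x x' : X), 0 < P a x x' → φ a x ≤ φ a x')

/-- In a state-based potential game, any maximizer `[a*,x*]` of the potential such that
`x*` is recurrent for `P(a*;·,·)` is a recurrent state equilibrium. -/
theorem potential_maximizer_recurrent_is_rse {ι : Type*} [DecidableEq ι] [Fintype ι]
    {A : ι → Type*} [∀ i, Fintype (A i)] {X : Type*} [Fintype X]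
    (P : (∀ i, A i) → X → X → ℝ) (c : ι → (∀ i, A i) → X → ℝ)
    (φ : (∀ i, A i) → X → ℝ) (hpot : IsPotential P c φ)
    (a : ∀ i, A i) (x : X)
    (hmax : ∀ (b : ∀ i, A i) (y : X), φ b y ≤ φ a x)
    (hrec : ∀ y, Reach P a x y → Reach P a y x) :
    IsRSE P c a x := by
  obtain ⟨hc, hmono⟩ := hpot
  refine ⟨hrec, fun y hy i b => ?_⟩
  have hxy : φ a x ≤ φ a y := by
    induction hy with
    | single h => exact hmono _ _ _ h
    | tail _ h ih => exact ih.trans (hmono _ _ _ h)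
  have heq : φ a y = φ a x := le_antisymm (hmax a y) hxy
  have := hc i b a y
  have hb := hmax (Function.update a i b) y
  linarith
end

section
/- Every finite state-based potential game possesses at least one recurrent state equilibrium. -/
/-- Every finite state-based potential game possesses at least one recurrent state
equilibrium. -/
theorem exists_rse_of_potential {ι : Type*} [DecidableEq ι] [Fintype ι]
    {A : ι → Type*} [∀ i, Fintype (A i)] [∀ i, Nonempty (A i)]
    {X : Type*} [Fintype X] [Nonempty X]
    (P : (∀ i, A i) → X → X → ℝ) (c : ι → (∀ i, A i) → X → ℝ)
    (hP0 : ∀ a x y, 0 ≤ P a x y) (hP1 : ∀ a x, ∑ y, P a x y = 1)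
    (φ : (∀ i, A i) → X → ℝ) (hpot : IsPotential P c φ) :
    ∃ (a : ∀ i, A i) (x : X), IsRSE P c a x := by
  classical
  obtain ⟨⟨a, x0⟩, -, hmax⟩ := Finset.exists_max_image Finset.univ
    (fun p : (∀ i, A i) × X => φ p.1 p.2)
    ⟨(Classical.arbitrary _, Classical.arbitrary _), Finset.mem_univ _⟩
  have mono : ∀ (b : ∀ i, A i) (u v : X),
      Relation.ReflTransGen (fun u v => 0 < P b u v) u v → φ b u ≤ φ b v := by
    intro b u v h
    induction h with
    | refl => exact le_refl _
    | tail _ step ih => exact ih.trans (hpot.2 _ _ _ step)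
  set r := fun u v : X => 0 < P a u v with hr
  set f : X → ℕ := fun y => (Finset.univ.filter fun z => Relation.ReflTransGen r y z).card
    with hf
  obtain ⟨y, hy, hmin⟩ := Finset.exists_min_image
    (Finset.univ.filter fun z => Relation.ReflTransGen r x0 z) f
    ⟨x0, Finset.mem_filter.mpr ⟨Finset.mem_univ _, Relation.ReflTransGen.refl⟩⟩
  have hx0y : Relation.ReflTransGen r x0 y := by simpa using hy
  refine ⟨a, y, ?_, ?_⟩
  · intro z hz
    have hz' : Relation.ReflTransGen r y z := hz.to_reflTransGen
    have hx0z : Relation.ReflTransGen r x0 z := hx0y.trans hz'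
    have hsub : (Finset.univ.filter fun w => Relation.ReflTransGen r z w)
        ⊆ (Finset.univ.filter fun w => Relation.ReflTransGen r y w) := by
      intro w hw
      simp only [Finset.mem_filter, Finset.mem_univ, true_and] at hw ⊢
      exact hz'.trans hw
    have hle : f y ≤ f z := hmin z (by simpa using hx0z)
    have heq : (Finset.univ.filter fun w => Relation.ReflTransGen r z w)
        = (Finset.univ.filter fun w => Relation.ReflTransGen r y w) :=
      Finset.eq_of_subset_of_card_le hsub hle
    have hzy : Relation.ReflTransGen r z y := by
      have hy' : y ∈ Finset.univ.filter fun w => Relation.ReflTransGen r y w :=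
        Finset.mem_filter.mpr ⟨Finset.mem_univ _, Relation.ReflTransGen.refl⟩
      rw [← heq] at hy'
      simpa using hy'
    rcases Relation.reflTransGen_iff_eq_or_transGen.mp hzy with h | h
    · exact h ▸ hz
    · exact h
  · intro z hz i b
    have hx0z : Relation.ReflTransGen r x0 z := hx0y.trans hz.to_reflTransGen
    have h1 : φ a x0 ≤ φ a z := mono a _ _ hx0z
    have h2 : φ a z ≤ φ a x0 := hmax (a, z) (Finset.mem_univ _)
    have h3 : φ (Function.update a i b) z ≤ φ a x0 :=
      hmax (Function.update a i b, z) (Finset.mem_univ _)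
    have h4 := hpot.1 i b a z
    linarith
end

section
/- In the state-based game of Example 12, for every state x ∈ {3,4} and every joint action a, the pair [a,x] is not a recurrent state equilibrium, and the set {3,4} is closed under every transition matrix P(a;·,·); consequently, no learning process that generates states according to P can reach a recurrent state equilibrium from initial state 3 or 4. -/
/-- Payoff tables of Example 12: states `0,1,2,3` code the states `1,2,3,4`. -/
noncomputable def tbl12 : Fin 4 → Fin 2 → Fin 2 → ℝ × ℝ :=
  ![![![(5, 4), (2, 3)], ![(4, 2), (3, 1)]],
    ![![(2, 2), (3, 1)], ![(0, 3), (2, 1)]],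
    ![![(-1, 1), (1, -1)], ![(1, -1), (-1, 1)]],
    ![![(2, 2), (2, 3)], ![(0, 3), (3, 1)]]]

/-- Payoff functions of Example 12. -/
noncomputable def c12 : Fin 2 → ((i : Fin 2) → (fun _ => Fin 2) i) → Fin 4 → ℝ :=
  fun i a x => if i = 0 then (tbl12 x (a 0) (a 1)).1 else (tbl12 x (a 0) (a 1)).2

/-- State transitions of Example 12: every transition matrix is block diagonal with
blocks `{1,2}` and `{3,4}` (coded `{0,1}` and `{2,3}`), all entries within each block
being strictly positive. -/
noncomputable def P12 : ((i : Fin 2) → (fun _ => Fin 2) i) → Fin 4 → Fin 4 → ℝ :=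
  fun _ => ![![1/2, 1/2, 0, 0], ![1/2, 1/2, 0, 0],
             ![0, 0, 1/2, 1/2], ![0, 0, 1/2, 1/2]]

lemma key12 (a : (i : Fin 2) → (fun _ => Fin 2) i) :
    ∃ i b, c12 i a 2 < c12 i (Function.update a i b) (2 : Fin 4) := by
  obtain ⟨u, v, rfl⟩ : ∃ u v, a = ![u, v] :=
    ⟨a 0, a 1, by funext i; fin_cases i <;> rfl⟩
  fin_cases u <;> fin_cases v
  · exact ⟨0, 1, by simp [c12, tbl12, Function.update]⟩
  · exact ⟨1, 0, by simp [c12, tbl12, Function.update]⟩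
  · exact ⟨1, 1, by simp [c12, tbl12, Function.update]⟩
  · exact ⟨0, 0, by simp [c12, tbl12, Function.update]⟩

lemma reach2 (a : (i : Fin 2) → (fun _ => Fin 2) i) (x : Fin 4) (hx : x = 2 ∨ x = 3) :
    Reach P12 a x 2 := by
  apply Relation.TransGen.single
  rcases hx with h | h <;> subst h <;>
    norm_num [P12, Matrix.cons_val_zero, Matrix.cons_val_one, Matrix.head_cons,
      Matrix.cons_val_two, Matrix.cons_val_three, Matrix.tail_cons,
      Matrix.vecHead, Matrix.vecTail]

lemma notRSE (a : (i : Fin 2) → (fun _ => Fin 2) i) (x : Fin 4) (hx : x = 2 ∨ x = 3) :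
    ¬ IsRSE P12 c12 a x := by
  rintro ⟨_, h2⟩
  obtain ⟨i, b, hlt⟩ := key12 a
  exact absurd (h2 2 (reach2 a x hx) i b) (not_le.mpr hlt)

lemma closed12 (a : (i : Fin 2) → (fun _ => Fin 2) i) (x y : Fin 4)
    (hx : x = 2 ∨ x = 3) (h : 0 < P12 a x y) : y = 2 ∨ y = 3 := by
  fin_cases y <;> rcases hx with h' | h' <;> subst h' <;>
    simp_all [P12, Matrix.cons_val_zero, Matrix.cons_val_one, Matrix.head_cons,
      Matrix.cons_val_two, Matrix.cons_val_three, Matrix.tail_cons,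
      Matrix.vecHead, Matrix.vecTail]

/-- In Example 12, no pair `[a, x]` with `x ∈ {3,4}` is a recurrent state equilibrium,
the set `{3,4}` is closed under every transition matrix, and consequently no trajectory
generated according to `P` starting in `{3,4}` ever reaches a recurrent state
equilibrium. -/
theorem example12 :
    (∀ (a : (i : Fin 2) → (fun _ => Fin 2) i) (x : Fin 4),
        x = 2 ∨ x = 3 → ¬ IsRSE P12 c12 a x) ∧
    (∀ (a : (i : Fin 2) → (fun _ => Fin 2) i) (x y : Fin 4),
        x = 2 ∨ x = 3 → 0 < P12 a x y → y = 2 ∨ y = 3) ∧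
    (∀ (act : ℕ → (i : Fin 2) → (fun _ => Fin 2) i) (x : ℕ → Fin 4),
        (x 0 = 2 ∨ x 0 = 3) →
        (∀ t, 0 < P12 (act t) (x t) (x (t + 1))) →
        ∀ t, ¬ IsRSE P12 c12 (act t) (x t)) := by
  refine ⟨notRSE, closed12, ?_⟩
  intro act x h0 hstep t
  have hmem : ∀ t, x t = 2 ∨ x t = 3 := by
    intro t
    induction t with
    | zero => exact h0
    | succ n ih => exact closed12 (act n) (x n) (x (n+1)) ih (hstep n)
  exact notRSE (act t) (x t) (hmem t)
end
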